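/- Let h, V : ℝ → ℝ be differentiable, α_x > α ≥ 0, λ ≥ α_x, C, ρ > 0. Suppose for all t ≥ 0: h'(t) ≥ -α·h(t) - (C/ρ)·V(t) and V'(t) ≤ -λ·V(t), with V(t) ≥ 0. Define H(t) = (α_x - α)·h(t) - (C/ρ)·V(t). If H(0) ≥ 0, then H(t) ≥ 0 for all t ≥ 0, and consequently h(t) ≥ 0 for all t ≥ 0. -/

import Mathlib

/-- Scalar core of the layered safety theorem: if `h' ≥ -α h - (C/ρ) V`,
`V' ≤ -λ V`, `V ≥ 0`, with `α_x > α ≥ 0`, `λ ≥ α_x`, `C, ρ > 0`, then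
`H(t) = (α_x - α) h(t) - (C/ρ) V(t)` with `H(0) ≥ 0` stays nonnegative,
and consequently `h(t) ≥ 0` for all `t ≥ 0`. -/
theorem stmt_2 (h V : ℝ → ℝ) (α αx lam C ρ : ℝ)
    (hh : Differentiable ℝ h) (hV : Differentiable ℝ V)
    (hα : 0 ≤ α) (hαx : α < αx) (hlam : αx ≤ lam)
    (hC : 0 < C) (hρ : 0 < ρ)
    (hVpos : ∀ t : ℝ, 0 ≤ t → 0 ≤ V t)
    (hhineq : ∀ t : ℝ, 0 ≤ t → -α * h t - (C / ρ) * V t ≤ deriv h t)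
    (hVineq : ∀ t : ℝ, 0 ≤ t → deriv V t ≤ -lam * V t)
    (hH0 : 0 ≤ (αx - α) * h 0 - (C / ρ) * V 0) :
    (∀ t : ℝ, 0 ≤ t → 0 ≤ (αx - α) * h t - (C / ρ) * V t) ∧
    (∀ t : ℝ, 0 ≤ t → 0 ≤ h t) := by
  set g : ℝ → ℝ := fun t => Real.exp (α * t) * ((αx - α) * h t - (C / ρ) * V t) with hg
  have hder : ∀ t : ℝ, HasDerivAt g
      (α * Real.exp (α * t) * ((αx - α) * h t - (C / ρ) * V t) +
        Real.exp (α * t) * ((αx - α) * deriv h t - (C / ρ) * deriv V t)) t := by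
    intro t
    have he : HasDerivAt (fun t => Real.exp (α * t)) (α * Real.exp (α * t)) t := by
      have := ((hasDerivAt_id t).const_mul α).exp
      simpa [mul_comm] using this
    have hH : HasDerivAt (fun t => (αx - α) * h t - (C / ρ) * V t)
        ((αx - α) * deriv h t - (C / ρ) * deriv V t) t :=
      (((hh t).hasDerivAt.const_mul (αx - α)).sub ((hV t).hasDerivAt.const_mul (C / ρ)))
    exact he.mul hH
  have hgdiff : Differentiable ℝ g := fun t => (hder t).differentiableAt
  have hmono : MonotoneOn g (Set.Ici (0 : ℝ)) := by
    apply monotoneOn_of_deriv_nonneg (convex_Ici 0) hgdiff.continuous.continuousOn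
      hgdiff.differentiableOn
    intro t ht
    rw [interior_Ici] at ht
    have ht0 : (0 : ℝ) ≤ t := le_of_lt ht
    rw [(hder t).deriv]
    have hv := hVpos t ht0
    have h1 := hhineq t ht0
    have h2 := hVineq t ht0
    have hexp : (0:ℝ) < Real.exp (α * t) := Real.exp_pos _
    have hcρ : (0:ℝ) < C / ρ := div_pos hC hρ
    nlinarith [mul_pos hcρ hexp, mul_nonneg hv hexp.le, mul_nonneg (mul_nonneg hcρ.le hv) hexp.le,
      mul_le_mul_of_nonneg_left h1 (mul_nonneg (sub_pos.mpr hαx).le hexp.le),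
      mul_le_mul_of_nonneg_left h2 (mul_nonneg hcρ.le hexp.le)]
  have hHpos : ∀ t : ℝ, 0 ≤ t → 0 ≤ (αx - α) * h t - (C / ρ) * V t := by
    intro t ht
    have : g 0 ≤ g t := hmono (by simp) ht ht
    have hg0 : g 0 = (αx - α) * h 0 - (C / ρ) * V 0 := by simp [hg]
    have hgt : 0 ≤ g t := le_trans (hg0 ▸ hH0) this
    have hexp : (0:ℝ) < Real.exp (α * t) := Real.exp_pos _
    exact nonneg_of_mul_nonneg_right (by simpa [hg, mul_comm] using hgt) hexp
  refine ⟨hHpos, fun t ht => ?_⟩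
  have := hHpos t ht
  have hv := hVpos t ht
  have hcρ : (0:ℝ) < C / ρ := div_pos hC hρ
  nlinarith [mul_nonneg hcρ.le hv]
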